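/- Let X be a pointed metric space, Y a real Banach space, and 1 < p < ∞. For a Lipschitz map T : X → Y* with T(0) = 0, define the linear functional φ_T on the space ℱ(X;Y) of Y-valued molecules by φ_T(m) = Σ_{x∈X} ⟨T(x), m(x)⟩. Then T ↦ φ_T is a bijection between the set of Lipschitz-Cohen strongly p-summing maps T : X → Y* (with T(0) = 0) and the set of linear functionals on ℱ(X;Y) that are bounded with respect to μ_p, and this bijection is isometric: sup{ |φ_T(m)| : m a molecule with μ_p(m) ≤ 1 } = d_p^L(T). In other words, 𝒟_p^L(X;Y*) is isometrically the dual space of (ℱ(X;Y), μ_p). -/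

import Mathlib

set_option linter.unusedSectionVars false
set_option linter.unusedVariables false
set_option maxHeartbeats 1000000

/-!
STATEMENT 7: `𝒟_p^L(X;Y*)` is isometrically the dual of `(ℱ(X;Y), μ_p)`: the map
`T ↦ φ_T`, `φ_T(m) = Σ_x ⟨T(x), m(x)⟩`, is a bijection from the Lipschitz-Cohen
strongly `p`-summing maps `T : X → Y*` with `T(0) = 0` onto the `μ_p`-bounded linear
functionals on the space of molecules, and `sup{|φ_T(m)| : μ_p(m) ≤ 1} = d_p^L(T)`.
-/

open scoped BigOperators NNReal

noncomputable section

variable {X : Type*} [MetricSpace X] {Y : Type*} [NormedAddCommGroup Y] [NormedSpace ℝ Y]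

/-- The atom `y·m_{x x'}`. -/
def molAtom (x x' : X) (y : Y) : X →₀ Y :=
  Finsupp.single x y - Finsupp.single x' y

/-- The space `ℱ(X;Y)` of `Y`-valued molecules on `X`. -/
def MolSpace (X : Type*) (Y : Type*) [NormedAddCommGroup Y] [NormedSpace ℝ Y] :
    Submodule ℝ (X →₀ Y) :=
  LinearMap.ker (Finsupp.lsum ℝ fun _ : X => (LinearMap.id : Y →ₗ[ℝ] Y))

/-- `sup_{g ∈ B_{Y*}} (Σ_i |g(y_i)|^q)^{1/q}`. -/
def dualBallSup (q : ℝ) {n : ℕ} (y : Fin n → Y) : ℝ :=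
  ⨆ g : {g : Y →L[ℝ] ℝ // ‖g‖ ≤ 1}, (∑ i, |g.1 (y i)| ^ q) ^ (1 / q)

/-- The norm `μ_p` on molecules (`1 < p < ∞`, `q = p*`). -/
def muNorm (p q : ℝ) (m : X →₀ Y) : ℝ :=
  sInf {c : ℝ | ∃ (n : ℕ) (lam : Fin n → ℝ) (y : Fin n → Y) (x x' : Fin n → X),
    m = ∑ i, lam i • molAtom (x i) (x' i) (y i) ∧
    c = (∑ i, |lam i| ^ p * dist (x i) (x' i) ^ p) ^ (1 / p) * dualBallSup q y}

/-- `T` is Lipschitz-Cohen strongly `p`-summing with constant `C` (`q = p*`). -/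
def LipCohenCond {X : Type*} [MetricSpace X] {Z : Type*} [NormedAddCommGroup Z]
    [NormedSpace ℝ Z] (p q : ℝ) (T : X → Z) (C : ℝ) : Prop :=
  ∀ (n : ℕ) (x x' : Fin n → X) (zs : Fin n → (Z →L[ℝ] ℝ)) (lam : Fin n → ℝ),
    (∀ i, 0 < lam i) →
    ∑ i, lam i * |zs i (T (x i)) - zs i (T (x' i))| ≤
      C * (∑ i, lam i ^ p * dist (x i) (x' i) ^ p) ^ (1 / p) * dualBallSup q zs

/-- The linear functional `φ_T` on `ℱ(X;Y)` induced by `T : X → Y*`: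
`φ_T(m) = Σ_{x ∈ X} ⟨T(x), m(x)⟩`. -/
def phiT (T : X → (Y →L[ℝ] ℝ)) : MolSpace X Y →ₗ[ℝ] ℝ :=
  (Finsupp.lsum ℝ fun x : X => (T x).toLinearMap).comp (MolSpace X Y).subtype

section Aux

variable {p q : ℝ}

lemma conj_of (hp : 1 < p) (hpq : 1 / p + 1 / q = 1) : Real.HolderConjugate p q := by
  have hp0 : 0 < p := by linarith
  have hq : 0 < 1 / q := by
    have : 1 / p < 1 := by rw [div_lt_one hp0]; exact hp
    linarith
  simpa using Real.holderConjugate_one_div (a := 1 / p) (b := 1 / q) (by positivity) hq hpq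

instance ballNonempty {W : Type*} [NormedAddCommGroup W] [NormedSpace ℝ W] :
    Nonempty {g : W →L[ℝ] ℝ // ‖g‖ ≤ 1} := ⟨⟨0, by simp⟩⟩

section DBS

variable (hq : 0 < q)
include hq

lemma dbs_term_nonneg {n : ℕ} (y : Fin n → Y) (g : {g : Y →L[ℝ] ℝ // ‖g‖ ≤ 1}) :
    0 ≤ (∑ i, |g.1 (y i)| ^ q) ^ (1 / q) :=
  Real.rpow_nonneg (Finset.sum_nonneg fun i _ => Real.rpow_nonneg (abs_nonneg _) _) _

lemma dbs_term_le {n : ℕ} (y : Fin n → Y) (g : {g : Y →L[ℝ] ℝ // ‖g‖ ≤ 1}) :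
    (∑ i, |g.1 (y i)| ^ q) ^ (1 / q) ≤ (∑ i, ‖y i‖ ^ q) ^ (1 / q) := by
  apply Real.rpow_le_rpow (Finset.sum_nonneg fun i _ => Real.rpow_nonneg (abs_nonneg _) _)
    (Finset.sum_le_sum fun i _ => ?_) (by positivity)
  apply Real.rpow_le_rpow (abs_nonneg _) ?_ hq.le
  calc |g.1 (y i)| = ‖g.1 (y i)‖ := (Real.norm_eq_abs _).symm
    _ ≤ ‖g.1‖ * ‖y i‖ := g.1.le_opNorm _
    _ ≤ 1 * ‖y i‖ := by gcongr; exact g.2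
    _ = ‖y i‖ := one_mul _

lemma dbs_bddAbove {n : ℕ} (y : Fin n → Y) :
    BddAbove (Set.range fun g : {g : Y →L[ℝ] ℝ // ‖g‖ ≤ 1} =>
      (∑ i, |g.1 (y i)| ^ q) ^ (1 / q)) := by
  refine ⟨(∑ i, ‖y i‖ ^ q) ^ (1 / q), ?_⟩
  rintro _ ⟨g, rfl⟩
  exact dbs_term_le hq y g

lemma dualBallSup_nonneg {n : ℕ} (y : Fin n → Y) : 0 ≤ dualBallSup q y :=
  Real.iSup_nonneg fun g => dbs_term_nonneg hq y g

lemma le_dualBallSup {n : ℕ} (y : Fin n → Y) (g : Y →L[ℝ] ℝ) (hg : ‖g‖ ≤ 1) :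
    (∑ i, |g (y i)| ^ q) ^ (1 / q) ≤ dualBallSup q y :=
  le_ciSup (dbs_bddAbove hq y) (⟨g, hg⟩ : {g : Y →L[ℝ] ℝ // ‖g‖ ≤ 1})

end DBS

lemma repval_nonneg (hq : 0 < q) {n : ℕ} (lam : Fin n → ℝ) (y : Fin n → Y)
    (x x' : Fin n → X) :
    0 ≤ (∑ i, |lam i| ^ p * dist (x i) (x' i) ^ p) ^ (1 / p) * dualBallSup q y :=
  mul_nonneg (Real.rpow_nonneg (Finset.sum_nonneg fun i _ =>
    mul_nonneg (Real.rpow_nonneg (abs_nonneg _) _)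
      (Real.rpow_nonneg dist_nonneg _)) _) (dualBallSup_nonneg hq y)

def repSet (p q : ℝ) (m : X →₀ Y) : Set ℝ :=
  {c : ℝ | ∃ (n : ℕ) (lam : Fin n → ℝ) (y : Fin n → Y) (x x' : Fin n → X),
    m = ∑ i, lam i • molAtom (x i) (x' i) (y i) ∧
    c = (∑ i, |lam i| ^ p * dist (x i) (x' i) ^ p) ^ (1 / p) * dualBallSup q y}

lemma muNorm_eq_sInf (m : X →₀ Y) : muNorm p q m = sInf (repSet p q m) := rfl

lemma repSet_nonneg (hq : 0 < q) {m : X →₀ Y} {c : ℝ} (hc : c ∈ repSet p q m) : 0 ≤ c := by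
  obtain ⟨n, lam, y, x, x', -, rfl⟩ := hc
  exact repval_nonneg hq lam y x x'

lemma repSet_bddBelow (hq : 0 < q) (m : X →₀ Y) : BddBelow (repSet p q m) :=
  ⟨0, fun c hc => repSet_nonneg hq hc⟩

lemma muNorm_nonneg (hq : 0 < q) (m : X →₀ Y) : 0 ≤ muNorm p q m :=
  Real.sInf_nonneg fun _ hc => repSet_nonneg hq hc

lemma muNorm_le (hq : 0 < q) {m : X →₀ Y} {c : ℝ} (hc : c ∈ repSet p q m) :
    muNorm p q m ≤ c :=
  csInf_le (repSet_bddBelow hq m) hc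

lemma molAtom_mem (x x' : X) (y : Y) : molAtom x x' y ∈ MolSpace X Y := by
  simp [MolSpace, LinearMap.mem_ker, molAtom, map_sub, Finsupp.lsum_single]

lemma molecule_eq_sum (x0 : X) (m : X →₀ Y) (hm : m ∈ MolSpace X Y) :
    m = ∑ a ∈ m.support, molAtom a x0 (m a) := by
  classical
  have hsum : ∑ a ∈ m.support, m a = 0 := by
    have h0 : (Finsupp.lsum ℝ fun _ : X => (LinearMap.id : Y →ₗ[ℝ] Y)) m = 0 := hm
    simpa [Finsupp.lsum_apply, Finsupp.sum] using h0
  have h1 : ∑ a ∈ m.support, Finsupp.single a (m a) = m := by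
    have := Finsupp.sum_single m
    simpa [Finsupp.sum] using this
  calc m = ∑ a ∈ m.support, Finsupp.single a (m a)
        - Finsupp.single x0 (∑ a ∈ m.support, m a) := by
        rw [hsum, Finsupp.single_zero, sub_zero, h1]
    _ = ∑ a ∈ m.support, (Finsupp.single a (m a) - Finsupp.single x0 (m a)) := by
        rw [Finsupp.single_finset_sum, Finset.sum_sub_distrib]
    _ = ∑ a ∈ m.support, molAtom a x0 (m a) := rfl

lemma repSet_nonempty (p q : ℝ) (x0 : X) {m : X →₀ Y} (hm : m ∈ MolSpace X Y) :
    (repSet p q m).Nonempty := by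
  classical
  set n := Fintype.card ↥m.support with hn
  set e : Fin n ≃ ↥m.support := (Fintype.equivFin ↥m.support).symm with he
  refine ⟨_, n, (fun _ => (1 : ℝ)), (fun i => m ((e i : X))), (fun i => (e i : X)),
    (fun _ => x0), ?_, rfl⟩
  have : ∑ i : Fin n, molAtom ((e i : X)) x0 (m ((e i : X)))
      = ∑ a ∈ m.support, molAtom a x0 (m a) := by
    rw [← Finset.sum_coe_sort m.support (fun a => molAtom a x0 (m a))]
    exact Fintype.sum_equiv e _ _ (fun i => rfl)
  simp only [one_smul, this]
  exact molecule_eq_sum x0 m hm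

lemma lsumT_molAtom (T : X → Y →L[ℝ] ℝ) (x x' : X) (y : Y) :
    Finsupp.lsum ℝ (fun a : X => (T a).toLinearMap) (molAtom x x' y) = T x y - T x' y := by
  simp [molAtom, map_sub, Finsupp.lsum_single]

lemma phiT_eq (T : X → Y →L[ℝ] ℝ) (m : MolSpace X Y) :
    phiT T m = Finsupp.lsum ℝ (fun a : X => (T a).toLinearMap) (m : X →₀ Y) := rfl

lemma phiT_molAtom (T : X → Y →L[ℝ] ℝ) (x x' : X) (y : Y) :
    phiT T ⟨molAtom x x' y, molAtom_mem x x' y⟩ = T x y - T x' y :=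
  lsumT_molAtom T x x' y

/-! ### P1 : the fundamental bound `|φ_T m| ≤ C ⬝ (rep value)` -/

lemma P1_rep (hp : 1 < p) (hpq : 1 / p + 1 / q = 1) (T : X → Y →L[ℝ] ℝ)
    {C : ℝ} (hC : 0 ≤ C) (hcond : LipCohenCond p q T C) (m : MolSpace X Y)
    {n : ℕ} {lam : Fin n → ℝ} {y : Fin n → Y} {x x' : Fin n → X}
    (hrep : (m : X →₀ Y) = ∑ i, lam i • molAtom (x i) (x' i) (y i)) :
    |phiT T m| ≤
      C * ((∑ i, |lam i| ^ p * dist (x i) (x' i) ^ p) ^ (1 / p) * dualBallSup q y) := by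
  classical
  have hq1 : 1 < q := (Real.HolderTriple.lt (conj_of hp hpq).symm)
  have hq0 : 0 < q := lt_trans one_pos hq1
  set D : Fin n → ℝ := fun i => T (x i) (y i) - T (x' i) (y i) with hD
  have hphi : phiT T m = ∑ i, lam i * D i := by
    rw [phiT_eq, hrep, map_sum]
    refine Finset.sum_congr rfl fun i _ => ?_
    rw [map_smul, lsumT_molAtom, smul_eq_mul]
  set J : Finset (Fin n) := Finset.univ.filter (fun i => lam i ≠ 0) with hJ
  set n' := Fintype.card ↥J with hn'
  set e : Fin n' ≃ ↥J := (Fintype.equivFin ↥J).symm with he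
  have hmem : ∀ j : Fin n', lam ((e j : Fin n)) ≠ 0 := fun j => (Finset.mem_filter.1 (e j).2).2
  set ι : Y → ((Y →L[ℝ] ℝ) →L[ℝ] ℝ) := fun v => NormedSpace.inclusionInDoubleDual ℝ Y v with hι
  have hcond' := hcond n' (fun j => x (e j)) (fun j => x' (e j))
      (fun j => ι (y (e j))) (fun j => |lam (e j)|) (fun j => abs_pos.2 (hmem j))
  -- identify the left-hand side of hcond'
  have hL : ∑ j : Fin n', |lam (e j)| * |(ι (y (e j))) (T (x (e j))) - (ι (y (e j))) (T (x' (e j)))|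
      = ∑ j : Fin n', |lam (e j)| * |D (e j)| := by
    refine Finset.sum_congr rfl fun j _ => ?_
    rw [hι, hD, NormedSpace.dual_def, NormedSpace.dual_def]
  have hreidx : ∀ F : Fin n → ℝ, ∑ j : Fin n', F (e j) = ∑ i ∈ J, F i := by
    intro F
    rw [← Finset.sum_coe_sort J F]
    exact Fintype.sum_equiv e _ _ (fun j => rfl)
  have h1 : |phiT T m| ≤ ∑ j : Fin n', |lam (e j)| * |D (e j)| := by
    rw [hphi]
    have h2 : ∑ i, lam i * D i = ∑ i ∈ J, lam i * D i := by
      rw [hJ]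
      exact (Finset.sum_filter_of_ne (fun i _ h => by
        intro h0; exact h (by rw [h0, zero_mul]))).symm
    rw [h2, hreidx (fun i => |lam i| * |D i|)]
    calc |∑ i ∈ J, lam i * D i| ≤ ∑ i ∈ J, |lam i * D i| := Finset.abs_sum_le_sum_abs _ _
      _ = ∑ i ∈ J, |lam i| * |D i| := by simp [abs_mul]
  -- A-part
  have hA : (∑ j : Fin n', |lam (e j)| ^ p * dist (x (e j)) (x' (e j)) ^ p)
      ≤ ∑ i, |lam i| ^ p * dist (x i) (x' i) ^ p := by
    rw [hreidx (fun i => |lam i| ^ p * dist (x i) (x' i) ^ p)]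
    exact Finset.sum_le_sum_of_subset_of_nonneg (Finset.filter_subset _ _)
      (fun i _ _ => by positivity)
  have hA' : (∑ j : Fin n', |lam (e j)| ^ p * dist (x (e j)) (x' (e j)) ^ p) ^ (1 / p)
      ≤ (∑ i, |lam i| ^ p * dist (x i) (x' i) ^ p) ^ (1 / p) := by
    apply Real.rpow_le_rpow (Finset.sum_nonneg fun j _ => by positivity) hA (by positivity)
  -- S-part
  have hS : dualBallSup q (fun j => ι (y (e j))) ≤ dualBallSup q y := by
    apply ciSup_le
    rintro ⟨g, hg⟩
    have hcomp : ‖g.comp (NormedSpace.inclusionInDoubleDual ℝ Y)‖ ≤ 1 := by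
      refine le_trans (g.opNorm_comp_le _) ?_
      have h1 := NormedSpace.inclusionInDoubleDual_norm_le ℝ Y
      calc ‖g‖ * _ ≤ 1 * 1 := by
            apply mul_le_mul hg h1 (ContinuousLinearMap.opNorm_nonneg _) zero_le_one
        _ = 1 := one_mul 1
    calc (∑ j : Fin n', |g (ι (y (e j)))| ^ q) ^ (1 / q)
        = (∑ j : Fin n', |(g.comp (NormedSpace.inclusionInDoubleDual ℝ Y)) (y (e j))| ^ q)
            ^ (1 / q) := by
          simp only [hι, ContinuousLinearMap.comp_apply]
      _ ≤ (∑ i, |(g.comp (NormedSpace.inclusionInDoubleDual ℝ Y)) (y i)| ^ q) ^ (1 / q) := by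
          apply Real.rpow_le_rpow (Finset.sum_nonneg fun j _ => by positivity) ?_ (by positivity)
          rw [hreidx (fun i => |(g.comp (NormedSpace.inclusionInDoubleDual ℝ Y)) (y i)| ^ q)]
          exact Finset.sum_le_sum_of_subset_of_nonneg (Finset.filter_subset _ _)
            (fun i _ _ => by positivity)
      _ ≤ dualBallSup q y := le_dualBallSup hq0 y _ hcomp
  have hS0 : 0 ≤ dualBallSup q (fun j => ι (y (e j))) := dualBallSup_nonneg hq0 _
  have hA0 : 0 ≤ (∑ j : Fin n', |lam (e j)| ^ p * dist (x (e j)) (x' (e j)) ^ p) ^ (1 / p) := by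
    positivity
  calc |phiT T m| ≤ ∑ j : Fin n', |lam (e j)| * |D (e j)| := h1
    _ ≤ C * (∑ j : Fin n', |lam (e j)| ^ p * dist (x (e j)) (x' (e j)) ^ p) ^ (1 / p)
        * dualBallSup q (fun j => ι (y (e j))) := by
        rw [← hL]; exact hcond'
    _ ≤ C * (∑ i, |lam i| ^ p * dist (x i) (x' i) ^ p) ^ (1 / p) * dualBallSup q y := by
        apply mul_le_mul (by apply mul_le_mul le_rfl hA' hA0 hC) hS hS0
        positivity
    _ = C * ((∑ i, |lam i| ^ p * dist (x i) (x' i) ^ p) ^ (1 / p) * dualBallSup q y) := by ring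

lemma P1 (hp : 1 < p) (hpq : 1 / p + 1 / q = 1) (x0 : X) (T : X → Y →L[ℝ] ℝ)
    {C : ℝ} (hC : 0 ≤ C) (hcond : LipCohenCond p q T C) (m : MolSpace X Y) :
    |phiT T m| ≤ C * muNorm p q (m : X →₀ Y) := by
  have hq0 : 0 < q := lt_trans one_pos (Real.HolderTriple.lt (conj_of hp hpq).symm)
  have hall : ∀ c ∈ repSet p q (m : X →₀ Y), |phiT T m| ≤ C * c := by
    rintro c ⟨n, lam, y, x, x', hrep, rfl⟩
    exact P1_rep hp hpq T hC hcond m hrep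
  rcases eq_or_lt_of_le hC with hC0 | hC0
  · obtain ⟨c, hc⟩ := repSet_nonempty p q x0 m.2
    have h1 := hall c hc
    rw [← hC0] at h1 ⊢
    rw [zero_mul] at h1 ⊢
    exact h1
  · have h2 : ∀ c ∈ repSet p q (m : X →₀ Y), |phiT T m| / C ≤ c := fun c hc =>
      (div_le_iff₀' hC0).2 (hall c hc)
    have h3 : |phiT T m| / C ≤ muNorm p q (m : X →₀ Y) :=
      le_csInf (repSet_nonempty p q x0 m.2) h2
    calc |phiT T m| = C * (|phiT T m| / C) := by field_simp
      _ ≤ C * muNorm p q (m : X →₀ Y) := by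
          exact mul_le_mul_of_nonneg_left h3 hC

lemma phiT_injective (x0 : X) (T₁ T₂ : X → Y →L[ℝ] ℝ) (h1 : T₁ x0 = 0) (h2 : T₂ x0 = 0)
    (heq : phiT T₁ = phiT T₂) : T₁ = T₂ := by
  funext x
  ext y
  have h := DFunLike.congr_fun heq ⟨molAtom x x0 y, molAtom_mem x x0 y⟩
  rw [phiT_molAtom, phiT_molAtom, h1, h2] at h
  simpa using h


/-! ### muNorm : further properties -/

lemma muNorm_zero_le' (hp : 1 < p) (hq0 : 0 < q) : muNorm p q (0 : X →₀ Y) ≤ 0 := by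
  have h0 : (0 : ℝ) ∈ repSet p q (0 : X →₀ Y) := by
    refine ⟨0, Fin.elim0, Fin.elim0, Fin.elim0, Fin.elim0, by simp, ?_⟩
    rw [Finset.univ_eq_empty, Finset.sum_empty, Real.zero_rpow (by positivity), zero_mul]
  exact muNorm_le hq0 h0

lemma dualBallSup_single_le (hq0 : 0 < q) (y : Y) :
    dualBallSup q (fun _ : Fin 1 => y) ≤ ‖y‖ := by
  apply ciSup_le
  rintro ⟨g, hg⟩
  have h1 : (∑ _i : Fin 1, |g y| ^ q) = |g y| ^ q := by simp
  rw [h1, ← Real.rpow_mul (abs_nonneg _), mul_one_div_cancel hq0.ne', Real.rpow_one]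
  calc |g y| = ‖g y‖ := (Real.norm_eq_abs _).symm
    _ ≤ ‖g‖ * ‖y‖ := g.le_opNorm y
    _ ≤ 1 * ‖y‖ := by gcongr
    _ = ‖y‖ := one_mul _

lemma muNorm_molAtom_le (hp : 1 < p) (hq0 : 0 < q) (x x0 : X) (y : Y) :
    muNorm p q (molAtom x x0 y) ≤ dist x x0 * ‖y‖ := by
  have hp0 : (0:ℝ) < p := lt_trans one_pos hp
  have hmem : ((∑ _i : Fin 1, |(1:ℝ)| ^ p * dist x x0 ^ p) ^ (1 / p)
      * dualBallSup q (fun _ : Fin 1 => y)) ∈ repSet p q (molAtom x x0 y) := by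
    exact ⟨1, fun _ => (1:ℝ), fun _ => y, fun _ => x, fun _ => x0, by simp, rfl⟩
  refine (muNorm_le hq0 hmem).trans ?_
  have h1 : (∑ _i : Fin 1, |(1:ℝ)| ^ p * dist x x0 ^ p) ^ (1 / p) = dist x x0 := by
    rw [Fin.sum_univ_one, abs_one, Real.one_rpow, one_mul, ← Real.rpow_mul dist_nonneg,
      mul_one_div_cancel hp0.ne', Real.rpow_one]
  rw [h1]
  exact mul_le_mul_of_nonneg_left (dualBallSup_single_le hq0 y) dist_nonneg

lemma muNorm_smul_le (hp : 1 < p) (hq0 : 0 < q) (x0 : X) {m : X →₀ Y}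
    (hm : m ∈ MolSpace X Y) (c : ℝ) :
    muNorm p q (c • m) ≤ |c| * muNorm p q m := by
  have hp0 : (0:ℝ) < p := lt_trans one_pos hp
  rcases eq_or_ne c 0 with rfl | hc
  · rw [zero_smul, abs_zero, zero_mul]
    exact muNorm_zero_le' hp hq0
  · have habs : 0 < |c| := abs_pos.2 hc
    have key : ∀ v ∈ repSet p q m, muNorm p q (c • m) ≤ |c| * v := by
      rintro v ⟨n, lam, y, x, x', hrep, rfl⟩
      have hval : ((∑ i, |c * lam i| ^ p * dist (x i) (x' i) ^ p) ^ (1 / p)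
            * dualBallSup q y)
          = |c| * ((∑ i, |lam i| ^ p * dist (x i) (x' i) ^ p) ^ (1 / p)
            * dualBallSup q y) := by
        have h2 : ∑ i, |c * lam i| ^ p * dist (x i) (x' i) ^ p
            = |c| ^ p * ∑ i, |lam i| ^ p * dist (x i) (x' i) ^ p := by
          rw [Finset.mul_sum]
          refine Finset.sum_congr rfl fun i _ => ?_
          rw [abs_mul, Real.mul_rpow (abs_nonneg _) (abs_nonneg _), mul_assoc]
        rw [h2, Real.mul_rpow (by positivity) (Finset.sum_nonneg fun i _ => by positivity),
          ← Real.rpow_mul (abs_nonneg c), mul_one_div_cancel hp0.ne', Real.rpow_one, mul_assoc]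
      have hmem : (|c| * ((∑ i, |lam i| ^ p * dist (x i) (x' i) ^ p) ^ (1 / p)
            * dualBallSup q y)) ∈ repSet p q (c • m) := by
        refine ⟨n, fun i => c * lam i, y, x, x', ?_, hval.symm⟩
        rw [hrep, Finset.smul_sum]
        exact Finset.sum_congr rfl fun i _ => by
          show c • lam i • molAtom (x i) (x' i) (y i) = (c * lam i) • molAtom (x i) (x' i) (y i)
          rw [smul_smul]
      exact muNorm_le hq0 hmem
    have h3 : ∀ v ∈ repSet p q m, muNorm p q (c • m) / |c| ≤ v := fun v hv =>
      (div_le_iff₀' habs).2 (key v hv)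
    have h4 : muNorm p q (c • m) / |c| ≤ muNorm p q m :=
      le_csInf (repSet_nonempty p q x0 hm) h3
    calc muNorm p q (c • m) = |c| * (muNorm p q (c • m) / |c|) := by field_simp
      _ ≤ |c| * muNorm p q m := mul_le_mul_of_nonneg_left h4 habs.le

/-! ### construction of `T` from a bounded functional -/

def atomMapL (x0 x : X) : Y →ₗ[ℝ] MolSpace X Y :=
  LinearMap.codRestrict (MolSpace X Y)
    ((Finsupp.lsingle x : Y →ₗ[ℝ] X →₀ Y) - Finsupp.lsingle x0)
    (fun y => by
      have : (Finsupp.lsingle x - Finsupp.lsingle x0 : Y →ₗ[ℝ] X →₀ Y) y = molAtom x x0 y := by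
        simp [molAtom, Finsupp.lsingle_apply]
      rw [this]; exact molAtom_mem x x0 y)

lemma atomMapL_apply (x0 x : X) (y : Y) :
    ((atomMapL x0 x y : MolSpace X Y) : X →₀ Y) = molAtom x x0 y := by
  simp [atomMapL, molAtom, Finsupp.lsingle_apply, LinearMap.codRestrict]

lemma molecule_eq_sum_atomMapL (x0 : X) (m : MolSpace X Y) :
    m = ∑ a ∈ (m : X →₀ Y).support, atomMapL x0 a ((m : X →₀ Y) a) := by
  apply Subtype.ext
  push_cast [AddSubmonoidClass.coe_finset_sum]
  calc (m : X →₀ Y) = ∑ a ∈ (m : X →₀ Y).support, molAtom a x0 ((m : X →₀ Y) a) :=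
        molecule_eq_sum x0 (m : X →₀ Y) m.2
    _ = ∑ a ∈ (m : X →₀ Y).support, ((atomMapL x0 a ((m : X →₀ Y) a) : MolSpace X Y) : X →₀ Y) := by
        exact Finset.sum_congr rfl fun a _ => (atomMapL_apply x0 a _).symm



def toW (f : Y →L[ℝ] ℝ) : WeakDual ℝ Y := f
def ofW (g : WeakDual ℝ Y) : Y →L[ℝ] ℝ := g

@[simp] lemma ofW_toW (f : Y →L[ℝ] ℝ) : ofW (toW f) = f := rfl
@[simp] lemma ofW_add (g g' : WeakDual ℝ Y) : ofW (g + g') = ofW g + ofW g' := rfl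
@[simp] lemma ofW_smul (c : ℝ) (g : WeakDual ℝ Y) : ofW (c • g) = c • ofW g := rfl
@[simp] lemma ofW_zero : ofW (0 : WeakDual ℝ Y) = 0 := rfl
lemma toW_smul (c : ℝ) (f : Y →L[ℝ] ℝ) : c • toW f = toW (c • f) := rfl
lemma toW_add (f f' : Y →L[ℝ] ℝ) : toW f + toW f' = toW (f + f') := rfl

lemma continuous_ofW_eval (u : Y) : Continuous fun g : WeakDual ℝ Y => ofW g u :=
  WeakDual.eval_continuous u

lemma F4 {n : ℕ}
    (zs : Fin n → ((Y →L[ℝ] ℝ) →L[ℝ] ℝ)) (v : Fin n → (Y →L[ℝ] ℝ))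
    (A : Finset (Fin n → ℝ)) (hAne : A.Nonempty) (r : (Fin n → ℝ) → ℝ)
    (hr0 : ∀ a ∈ A, 0 < r a)
    (hrz : ∀ a ∈ A, ‖∑ i, a i • zs i‖ ≤ r a)
    (hsep : ∀ y : Fin n → Y, (∀ a ∈ A, ∑ i, a i • y i = 0) → ∀ i, y i = 0)
    (σ : ℝ) (hσ0 : 0 ≤ σ)
    (hσ : ∀ y : Fin n → Y, (∀ a ∈ A, ‖∑ i, a i • y i‖ ≤ r a) → ∑ i, v i (y i) ≤ σ) :
    ∑ i, zs i (v i) ≤ σ := by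
  classical
  have hAnonempty : Nonempty ↥A := hAne.to_subtype
  refine le_of_forall_pos_le_add fun δ hδ => ?_
  set σ' : ℝ := σ + δ with hσ'def
  have hσ'pos : 0 < σ' := by positivity
  have hσσ' : σ < σ' := by simp [hσ'def, hδ]
  set DD : Set (↥A → WeakDual ℝ Y) :=
    {g | ∑ a : ↥A, r a.1 * ‖ofW (g a)‖ ≤ 1} with hDDdef
  have hr0' : ∀ a : ↥A, 0 < r a.1 := fun a => hr0 a.1 a.2
  have hDD0 : (fun _ : ↥A => (0 : WeakDual ℝ Y)) ∈ DD := by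
    simp [hDDdef]
  -- 𝒟 is compact (Banach-Alaoglu)
  have hDDsub : DD ⊆ Set.univ.pi fun a : ↥A =>
      (WeakDual.toStrongDual ⁻¹' Metric.closedBall 0 (r a.1)⁻¹) := by
    intro g hg
    rw [Set.mem_univ_pi]
    intro a
    have h1 : r a.1 * ‖ofW (g a)‖ ≤ 1 := by
      refine le_trans ?_ hg
      exact Finset.single_le_sum (f := fun b : ↥A => r b.1 * ‖ofW (g b)‖)
        (fun b _ => mul_nonneg (hr0' b).le (norm_nonneg _)) (Finset.mem_univ a)
    have h2 : ‖ofW (g a)‖ ≤ (r a.1)⁻¹ := by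
      rw [← one_div, le_div_iff₀ (hr0' a)]
      calc ‖ofW (g a)‖ * r a.1 = r a.1 * ‖ofW (g a)‖ := mul_comm _ _
        _ ≤ 1 := h1
    simpa [Metric.mem_closedBall, dist_zero_right] using
      (show ‖WeakDual.toStrongDual (g a)‖ ≤ (r a.1)⁻¹ from h2)
  have hDDclosed : IsClosed DD := by
    have heq : DD = ⋂ u ∈ {u : ↥A → Y | ∀ a, ‖u a‖ ≤ 1},
        {g : ↥A → WeakDual ℝ Y | ∑ a : ↥A, r a.1 * (ofW (g a)) (u a) ≤ 1} := by
      ext g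
      simp only [Set.mem_iInter, Set.mem_setOf_eq, hDDdef]
      constructor
      · intro hg u hu
        refine le_trans (Finset.sum_le_sum fun a _ => ?_) hg
        have h1 : (ofW (g a)) (u a) ≤ ‖ofW (g a)‖ := by
          calc (ofW (g a)) (u a) ≤ |(ofW (g a)) (u a)| := le_abs_self _
            _ = ‖(ofW (g a)) (u a)‖ := (Real.norm_eq_abs _).symm
            _ ≤ ‖ofW (g a)‖ * ‖u a‖ := (ofW (g a)).le_opNorm _
            _ ≤ ‖ofW (g a)‖ * 1 := mul_le_mul_of_nonneg_left (hu a) (norm_nonneg _)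
            _ = ‖ofW (g a)‖ := mul_one _
        exact mul_le_mul_of_nonneg_left h1 (hr0' a).le
      · intro hg
        refine le_of_forall_pos_le_add fun ε hε => ?_
        set R : ℝ := ∑ a : ↥A, r a.1 with hRdef
        have hRpos : 0 < R + 1 := by
          have : 0 ≤ R := Finset.sum_nonneg fun a _ => (hr0' a).le
          linarith
        set η : ℝ := ε / (R + 1) with hηdef
        have hηpos : 0 < η := div_pos hε hRpos
        have hex : ∀ a : ↥A, ∃ u : Y, ‖u‖ ≤ 1 ∧ ‖ofW (g a)‖ - η ≤ (ofW (g a)) u := by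
          intro a
          rcases le_or_gt ‖ofW (g a)‖ η with hle | hlt
          · exact ⟨0, by simp, by simpa using sub_nonpos.2 hle⟩
          · obtain ⟨x, hx1, hx2⟩ := (ofW (g a)).exists_lt_apply_of_lt_opNorm
              (show ‖ofW (g a)‖ - η < ‖ofW (g a)‖ by linarith)
            rcases le_or_gt 0 ((ofW (g a)) x) with hpos | hneg
            · exact ⟨x, hx1.le, by rw [Real.norm_eq_abs, abs_of_nonneg hpos] at hx2; linarith⟩
            · refine ⟨-x, by simpa using hx1.le, ?_⟩
              rw [map_neg]
              rw [Real.norm_eq_abs, abs_of_neg hneg] at hx2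
              linarith
        choose u hu1 hu2 using hex
        have h3 := hg u hu1
        have h4 : ∑ a : ↥A, r a.1 * ‖ofW (g a)‖
            ≤ (∑ a : ↥A, r a.1 * (ofW (g a)) (u a)) + η * R := by
          rw [hRdef, Finset.mul_sum, ← Finset.sum_add_distrib]
          refine Finset.sum_le_sum fun a _ => ?_
          have := hu2 a
          nlinarith [(hr0' a).le, hu2 a]
        have h5 : η * R ≤ ε := by
          rw [hηdef]
          rw [div_mul_eq_mul_div, div_le_iff₀ hRpos]
          nlinarith [Finset.sum_nonneg fun a (_ : a ∈ Finset.univ) => (hr0' a).le]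
        linarith
    rw [heq]
    refine isClosed_biInter fun u hu => ?_
    have hcont : Continuous fun g : ↥A → WeakDual ℝ Y =>
        ∑ a : ↥A, r a.1 * (ofW (g a)) (u a) := by
      refine continuous_finset_sum _ fun a _ => ?_
      exact continuous_const.mul ((continuous_ofW_eval (u a)).comp (continuous_apply a))
    exact isClosed_le hcont continuous_const
  have hDDcompact : IsCompact DD := by
    refine IsCompact.of_isClosed_subset (isCompact_univ_pi fun a => ?_) hDDclosed hDDsub
    exact WeakDual.isCompact_closedBall (𝕜 := ℝ) (E := Y) 0 (r a.1)⁻¹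
  have hDDconvex : Convex ℝ DD := by
    intro g hg g' hg' s t hs ht hst
    simp only [hDDdef, Set.mem_setOf_eq] at hg hg' ⊢
    have hterm : ∀ a : ↥A, r a.1 * ‖ofW ((s • g + t • g') a)‖
        ≤ s * (r a.1 * ‖ofW (g a)‖) + t * (r a.1 * ‖ofW (g' a)‖) := by
      intro a
      have h1 : ofW ((s • g + t • g') a) = s • ofW (g a) + t • ofW (g' a) := rfl
      rw [h1]
      have e1 : ‖s • ofW (g a)‖ = s * ‖ofW (g a)‖ := by
        rw [show ‖s • ofW (g a)‖ = ‖s‖ * ‖ofW (g a)‖ from norm_smul s (ofW (g a)),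
          Real.norm_eq_abs, abs_of_nonneg hs]
      have e2 : ‖t • ofW (g' a)‖ = t * ‖ofW (g' a)‖ := by
        rw [show ‖t • ofW (g' a)‖ = ‖t‖ * ‖ofW (g' a)‖ from norm_smul t (ofW (g' a)),
          Real.norm_eq_abs, abs_of_nonneg ht]
      have h2 : ‖s • ofW (g a) + t • ofW (g' a)‖ ≤ s * ‖ofW (g a)‖ + t * ‖ofW (g' a)‖ := by
        refine le_trans (norm_add_le _ _) ?_
        rw [e1, e2]
      calc r a.1 * ‖s • ofW (g a) + t • ofW (g' a)‖
          ≤ r a.1 * (s * ‖ofW (g a)‖ + t * ‖ofW (g' a)‖) :=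
            mul_le_mul_of_nonneg_left h2 (hr0' a).le
        _ = s * (r a.1 * ‖ofW (g a)‖) + t * (r a.1 * ‖ofW (g' a)‖) := by ring
    calc ∑ a : ↥A, r a.1 * ‖ofW ((s • g + t • g') a)‖
        ≤ ∑ a : ↥A, (s * (r a.1 * ‖ofW (g a)‖) + t * (r a.1 * ‖ofW (g' a)‖)) :=
          Finset.sum_le_sum fun a _ => hterm a
      _ = s * (∑ a : ↥A, r a.1 * ‖ofW (g a)‖) + t * (∑ a : ↥A, r a.1 * ‖ofW (g' a)‖) := by
          rw [Finset.sum_add_distrib, Finset.mul_sum, Finset.mul_sum]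
      _ ≤ s * 1 + t * 1 := by
          exact add_le_add (mul_le_mul_of_nonneg_left hg hs)
            (mul_le_mul_of_nonneg_left hg' ht)
      _ = 1 := by rw [mul_one, mul_one, hst]
  -- the (scaled) decomposition map
  set PhiL : (↥A → WeakDual ℝ Y) →ₗ[ℝ] (Fin n → WeakDual ℝ Y) :=
    { toFun := fun g i => toW (∑ a : ↥A, (σ' * a.1 i) • ofW (g a)),
      map_add' := by
        intro g g'
        funext i
        show toW (∑ a : ↥A, (σ' * a.1 i) • ofW ((g + g') a))
            = toW (∑ a : ↥A, (σ' * a.1 i) • ofW (g a))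
              + toW (∑ a : ↥A, (σ' * a.1 i) • ofW (g' a))
        rw [toW_add]
        refine congrArg toW ?_
        rw [← Finset.sum_add_distrib]
        refine Finset.sum_congr rfl fun a _ => ?_
        have h1 : ofW ((g + g') a) = ofW (g a) + ofW (g' a) := rfl
        rw [h1, smul_add]
      map_smul' := by
        intro c g
        funext i
        show toW (∑ a : ↥A, (σ' * a.1 i) • ofW ((c • g) a))
            = c • toW (∑ a : ↥A, (σ' * a.1 i) • ofW (g a))
        rw [toW_smul]
        refine congrArg toW ?_
        rw [Finset.smul_sum]
        refine Finset.sum_congr rfl fun a _ => ?_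
        have h1 : ofW ((c • g) a) = c • ofW (g a) := rfl
        rw [h1, smul_comm] } with hPhiLdef
  have hPhiLapply : ∀ (g : ↥A → WeakDual ℝ Y) (i : Fin n),
      ofW (PhiL g i) = ∑ a : ↥A, (σ' * a.1 i) • ofW (g a) := fun g i => rfl
  have hPhiLcont : Continuous fun g : ↥A → WeakDual ℝ Y => PhiL g := by
    refine continuous_pi fun i => WeakDual.continuous_of_continuous_eval fun u => ?_
    have heval : (fun g : ↥A → WeakDual ℝ Y => (PhiL g i) u)
        = fun g => ∑ a : ↥A, (σ' * a.1 i) * (ofW (g a)) u := by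
      funext g
      show (ofW (PhiL g i)) u = _
      rw [hPhiLapply]
      rw [ContinuousLinearMap.sum_apply]
      exact Finset.sum_congr rfl fun a _ => rfl
    rw [heval]
    exact continuous_finset_sum _ fun a _ =>
      continuous_const.mul ((continuous_ofW_eval u).comp (continuous_apply a))
  set P' : Set (Fin n → WeakDual ℝ Y) := PhiL '' DD with hP'def
  have hP'compact : IsCompact P' := hDDcompact.image hPhiLcont
  have hP'convex : Convex ℝ P' := hDDconvex.linear_image PhiL
  have hP'closed : IsClosed P' := hP'compact.isClosed
  -- the target functional family
  set ψ : Fin n → WeakDual ℝ Y := fun i => toW (v i) with hψdef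
  -- the pairing of a family with a test vector
  -- Step : ψ ∈ P' via finite intersection property
  have hwitness : ∀ F : Finset (Fin n → Y), ∃ φ ∈ P',
      ∀ y ∈ F, ∑ i, (ofW (φ i)) (y i) = ∑ i, (v i) (y i) := by
    intro F
    set Xi : (Fin n → WeakDual ℝ Y) →ₗ[ℝ] (↥F → ℝ) :=
      { toFun := fun φ y => ∑ i, (ofW (φ i)) ((y : Fin n → Y) i),
        map_add' := by
          intro φ φ'
          funext y
          show ∑ i, (ofW ((φ + φ') i)) _ = _
          have : ∀ i, ofW ((φ + φ') i) = ofW (φ i) + ofW (φ' i) := fun i => rfl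
          simp only [this, ContinuousLinearMap.add_apply]
          rw [Finset.sum_add_distrib]
          rfl
        map_smul' := by
          intro c φ
          funext y
          show ∑ i, (ofW ((c • φ) i)) _ = _
          have : ∀ i, ofW ((c • φ) i) = c • ofW (φ i) := fun i => rfl
          simp only [this, ContinuousLinearMap.smul_apply]
          rw [← Finset.smul_sum]
          rfl } with hXidef
    have hXiapply : ∀ (φ : Fin n → WeakDual ℝ Y) (y : ↥F),
        Xi φ y = ∑ i, (ofW (φ i)) ((y : Fin n → Y) i) := fun φ y => rfl
    have hXicont : Continuous fun φ : Fin n → WeakDual ℝ Y => Xi φ := by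
      refine continuous_pi fun y => ?_
      have : (fun φ : Fin n → WeakDual ℝ Y => Xi φ y)
          = fun φ => ∑ i, (ofW (φ i)) ((y : Fin n → Y) i) := rfl
      rw [this]
      exact continuous_finset_sum _ fun i _ =>
        (continuous_ofW_eval _).comp (continuous_apply i)
    set Q : Set (↥F → ℝ) := Xi '' P' with hQdef
    have hQcompact : IsCompact Q := hP'compact.image hXicont
    have hQconvex : Convex ℝ Q := hP'convex.linear_image Xi
    by_cases hmem : Xi ψ ∈ Q
    · obtain ⟨φ, hφ, heq⟩ := hmem
      refine ⟨φ, hφ, fun y hy => ?_⟩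
      have := congrFun heq (⟨y, hy⟩ : ↥F)
      rw [hXiapply, hXiapply] at this
      exact this
    · exfalso
      obtain ⟨f, u, hfs, hfx⟩ :=
        geometric_hahn_banach_closed_point hQconvex hQcompact.isClosed hmem
      -- extract coefficients of f
      set cvec : ↥F → ℝ := fun y => f (fun y' => if y = y' then (1:ℝ) else 0) with hcvecdef
      have hfw : ∀ w : ↥F → ℝ, f w = ∑ y : ↥F, w y * cvec y := by
        intro w
        conv_lhs => rw [pi_eq_sum_univ w, map_sum]
        refine Finset.sum_congr rfl fun y _ => ?_
        rw [map_smul]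
        rfl
      set ybar : Fin n → Y := fun i => ∑ y : ↥F, cvec y • (y : Fin n → Y) i with hybardef
      have hpair : ∀ φ : Fin n → WeakDual ℝ Y,
          f (Xi φ) = ∑ i, (ofW (φ i)) (ybar i) := by
        intro φ
        rw [hfw]
        have h1 : ∀ y : ↥F, Xi φ y * cvec y
            = ∑ i, cvec y * (ofW (φ i)) ((y : Fin n → Y) i) := by
          intro y
          rw [hXiapply, Finset.sum_mul]
          exact Finset.sum_congr rfl fun i _ => mul_comm _ _
        rw [Finset.sum_congr rfl fun y _ => h1 y, Finset.sum_comm]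
        refine Finset.sum_congr rfl fun i _ => ?_
        rw [hybardef]
        rw [map_sum]
        refine Finset.sum_congr rfl fun y _ => ?_
        rw [map_smul]
        rfl
      -- u is positive
      have hu0 : 0 < u := by
        have h0 : (0 : ↥F → ℝ) ∈ Q := by
          refine ⟨PhiL (fun _ => 0), ⟨(fun _ => 0), hDD0, rfl⟩, ?_⟩
          funext y
          rw [hXiapply]
          have : ∀ i, ofW (PhiL (fun _ : ↥A => (0 : WeakDual ℝ Y)) i) = 0 := by
            intro i
            rw [hPhiLapply]
            simp
          simp [this]
        have := hfs 0 h0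
        rw [map_zero] at this
        exact this
      -- the constrained vectors
      set z : ↥A → Y := fun a => ∑ i, a.1 i • ybar i with hzdef
      -- each normalized constraint value is bounded by u
      have hclaim1 : ∀ a : ↥A, σ' * (‖z a‖ / r a.1) ≤ u := by
        intro a
        rcases eq_or_ne (z a) 0 with hz0 | hz0
        · rw [hz0, norm_zero, zero_div, mul_zero]
          exact hu0.le
        · obtain ⟨h, hh1, hh2⟩ := exists_dual_vector ℝ (z a) (norm_ne_zero_iff.mpr hz0)
          set g : ↥A → WeakDual ℝ Y :=
            fun b => if b = a then toW ((r a.1)⁻¹ • h) else 0 with hgdef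
          have hgDD : g ∈ DD := by
            simp only [hDDdef, Set.mem_setOf_eq, hgdef]
            have : ∀ b : ↥A, r b.1 * ‖ofW (if b = a then toW ((r a.1)⁻¹ • h) else 0)‖
                = if b = a then r a.1 * ((r a.1)⁻¹ * ‖h‖) else 0 := by
              intro b
              by_cases hba : b = a
              · subst hba
                rw [if_pos rfl, if_pos rfl, ofW_toW,
                  show ‖(r b.1)⁻¹ • h‖ = ‖(r b.1)⁻¹‖ * ‖h‖ from norm_smul _ h,
                  Real.norm_eq_abs, abs_of_pos (inv_pos.2 (hr0' b))]
              · simp [hba]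
            rw [Finset.sum_congr rfl fun b _ => this b, Finset.sum_ite_eq' Finset.univ a]
            rw [if_pos (Finset.mem_univ a), hh1, mul_one, mul_inv_cancel₀ (hr0' a).ne']
          have hfval : f (Xi (PhiL g)) < u := hfs _ ⟨PhiL g, ⟨g, hgDD, rfl⟩, rfl⟩
          rw [hpair] at hfval
          have hval : ∑ i, (ofW (PhiL g i)) (ybar i) = σ' * (‖z a‖ / r a.1) := by
            have h1 : ∀ i, (ofW (PhiL g i)) (ybar i)
                = ∑ b : ↥A, (σ' * b.1 i) * (ofW (g b)) (ybar i) := by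
              intro i
              rw [hPhiLapply, ContinuousLinearMap.sum_apply]
              exact Finset.sum_congr rfl fun b _ => rfl
            rw [Finset.sum_congr rfl fun i _ => h1 i, Finset.sum_comm]
            have h2 : ∀ b : ↥A, ∑ i, (σ' * b.1 i) * (ofW (g b)) (ybar i)
                = σ' * (ofW (g b)) (z b) := by
              intro b
              rw [hzdef, map_sum, Finset.mul_sum]
              refine Finset.sum_congr rfl fun i _ => ?_
              rw [map_smul]
              simp [smul_eq_mul]
              ring
            rw [Finset.sum_congr rfl fun b _ => h2 b]
            have h3 : ∀ b : ↥A, σ' * (ofW (g b)) (z b)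
                = if b = a then σ' * ((r a.1)⁻¹ * ‖z a‖) else 0 := by
              intro b
              by_cases hba : b = a
              · subst hba
                simp only [hgdef, if_pos rfl, ofW_toW]
                rw [ContinuousLinearMap.smul_apply, hh2]
                simp [smul_eq_mul]
              · simp [hgdef, hba]
            rw [Finset.sum_congr rfl fun b _ => h3 b, Finset.sum_ite_eq' Finset.univ a,
              if_pos (Finset.mem_univ a), div_eq_inv_mul]
          rw [hval] at hfval
          exact hfval.le
      -- contradiction
      have hXiψ : f (Xi ψ) = ∑ i, (v i) (ybar i) := by
        rw [hpair]
        rfl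
      set ρ : ℝ := Finset.univ.sup' (Finset.univ_nonempty) (fun a : ↥A => ‖z a‖ / r a.1)
        with hρdef
      rcases le_or_gt ρ 0 with hρ0 | hρ0
      · -- all constraints vanish, so ybar = 0
        have hz0 : ∀ a ∈ A, ∑ i, a i • ybar i = 0 := by
          intro a ha
          have h1 : ‖z ⟨a, ha⟩‖ / r a ≤ 0 := by
            refine le_trans ?_ hρ0
            rw [hρdef]
            exact Finset.le_sup' (fun b : ↥A => ‖z b‖ / r b.1)
              (Finset.mem_univ (⟨a, ha⟩ : ↥A))
          have h2 : 0 ≤ ‖z ⟨a, ha⟩‖ / r a := div_nonneg (norm_nonneg _) (hr0 a ha).le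
          have h3 : ‖z ⟨a, ha⟩‖ = 0 := by
            rcases div_eq_zero_iff.1 (le_antisymm h1 h2) with h | h
            · exact h
            · exact absurd h (hr0 a ha).ne'
          have h4 : z ⟨a, ha⟩ = 0 := norm_eq_zero.1 h3
          rw [hzdef] at h4
          exact h4
        have hybar0 : ∀ i, ybar i = 0 := hsep ybar hz0
        have : f (Xi ψ) = 0 := by
          rw [hXiψ]
          simp [hybar0]
        rw [this] at hfx
        exact absurd hfx (not_lt.2 hu0.le)
      · -- primal feasibility at scale ρ
        obtain ⟨a₀, ha₀mem, ha₀⟩ := Finset.exists_mem_eq_sup' Finset.univ_nonempty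
          (fun a : ↥A => ‖z a‖ / r a.1)
        have hfeas : ∀ a ∈ A, ‖∑ i, a i • (ρ⁻¹ • ybar i)‖ ≤ r a := by
          intro a ha
          have h1 : ∑ i, a i • (ρ⁻¹ • ybar i) = ρ⁻¹ • z ⟨a, ha⟩ := by
            rw [hzdef, Finset.smul_sum]
            exact Finset.sum_congr rfl fun i _ => smul_comm _ _ _
          rw [h1, norm_smul, Real.norm_eq_abs, abs_of_pos (inv_pos.2 hρ0)]
          have h2 : ‖z ⟨a, ha⟩‖ / r a ≤ ρ := by
            rw [hρdef]
            exact Finset.le_sup' (fun b : ↥A => ‖z b‖ / r b.1)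
              (Finset.mem_univ (⟨a, ha⟩ : ↥A))
          rw [div_le_iff₀ (hr0 a ha)] at h2
          rw [inv_mul_le_iff₀ hρ0]
          linarith [h2]
        have hprimal := hσ (fun i => ρ⁻¹ • ybar i) hfeas
        have h6 : ∑ i, (v i) (ρ⁻¹ • ybar i) = ρ⁻¹ * ∑ i, (v i) (ybar i) := by
          rw [Finset.mul_sum]
          exact Finset.sum_congr rfl fun i _ => by rw [map_smul]; rfl
        rw [h6] at hprimal
        have h7 : ∑ i, (v i) (ybar i) ≤ ρ * σ := by
          rw [inv_mul_le_iff₀ hρ0] at hprimal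
          linarith [hprimal]
        have h8 : σ' * ρ ≤ u := by
          have := hclaim1 a₀
          rw [← ha₀] at this
          exact this
        have h9 : u < ∑ i, (v i) (ybar i) := by
          rw [← hXiψ]
          exact hfx
        nlinarith
  -- FIP gives ψ ∈ P'
  have hψP' : ψ ∈ P' := by
    set CF : Finset (Fin n → Y) → Set (Fin n → WeakDual ℝ Y) := fun F =>
      P' ∩ {φ | ∀ y ∈ F, ∑ i, (ofW (φ i)) (y i) = ∑ i, (v i) (y i)} with hCFdef
    have hCFclosed : ∀ F, IsClosed (CF F) := by
      intro F
      refine IsClosed.inter hP'closed ?_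
      have heq2 : {φ : Fin n → WeakDual ℝ Y | ∀ y ∈ F, ∑ i, (ofW (φ i)) (y i) = ∑ i, (v i) (y i)}
          = ⋂ y ∈ F, {φ | ∑ i, (ofW (φ i)) (y i) = ∑ i, (v i) (y i)} := by
        ext φ; simp
      rw [heq2]
      refine isClosed_biInter fun y hy => ?_
      refine isClosed_eq ?_ continuous_const
      exact continuous_finset_sum _ fun i _ =>
        (continuous_ofW_eval _).comp (continuous_apply i)
    have hCFcompact : ∀ F, IsCompact (CF F) :=
      fun F => hP'compact.of_isClosed_subset (hCFclosed F) Set.inter_subset_left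
    have hCFne : ∀ F, (CF F).Nonempty := by
      intro F
      obtain ⟨φ, hφ1, hφ2⟩ := hwitness F
      exact ⟨φ, hφ1, hφ2⟩
    have hdir : Directed (· ⊇ ·) CF := by
      intro F F'
      refine ⟨F ∪ F', ?_, ?_⟩
      · rintro φ ⟨h1, h2⟩
        exact ⟨h1, fun y hy => h2 y (Finset.mem_union_left _ hy)⟩
      · rintro φ ⟨h1, h2⟩
        exact ⟨h1, fun y hy => h2 y (Finset.mem_union_right _ hy)⟩
    obtain ⟨φ, hφ⟩ := IsCompact.nonempty_iInter_of_directed_nonempty_isCompact_isClosed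
      CF hdir hCFne hCFcompact hCFclosed
    have hφP' : φ ∈ P' := (Set.mem_iInter.1 hφ ∅).1
    have hφeq : ∀ y : Fin n → Y, ∑ i, (ofW (φ i)) (y i) = ∑ i, (v i) (y i) := by
      intro y
      exact (Set.mem_iInter.1 hφ {y}).2 y (Finset.mem_singleton_self y)
    have hφψ : φ = ψ := by
      funext i
      show φ i = toW (v i)
      have : ofW (φ i) = v i := by
        ext w
        have := hφeq (Pi.single (M := fun _ : Fin n => Y) i w)
        have hL : ∑ j, (ofW (φ j)) (Pi.single (M := fun _ : Fin n => Y) i w j)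
            = (ofW (φ i)) w := by
          rw [Finset.sum_eq_single_of_mem i (Finset.mem_univ i)]
          · rw [Pi.single_eq_same]
          · intro j _ hj
            rw [Pi.single_eq_of_ne hj, map_zero]
        have hR : ∑ j, (v j) (Pi.single (M := fun _ : Fin n => Y) i w j) = (v i) w := by
          rw [Finset.sum_eq_single_of_mem i (Finset.mem_univ i)]
          · rw [Pi.single_eq_same]
          · intro j _ hj
            rw [Pi.single_eq_of_ne hj, map_zero]
        rw [hL, hR] at this
        exact this
      exact congrArg toW this
    rw [← hφψ]
    exact hφP'
  -- unpack and estimate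
  obtain ⟨g, hgDD, hgψ⟩ := hψP'
  have hvi : ∀ i, v i = ∑ a : ↥A, (σ' * a.1 i) • ofW (g a) := by
    intro i
    have : ofW (ψ i) = ofW (PhiL g i) := by rw [hgψ]
    rw [hPhiLapply] at this
    exact this
  have hfinal : ∑ i, zs i (v i) = σ' * ∑ a : ↥A, (∑ i, a.1 i • zs i) (ofW (g a)) := by
    have h1 : ∀ i, zs i (v i) = ∑ a : ↥A, (σ' * a.1 i) * zs i (ofW (g a)) := by
      intro i
      rw [hvi i, map_sum]
      exact Finset.sum_congr rfl fun a _ => by rw [map_smul]; rfl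
    rw [Finset.sum_congr rfl fun i _ => h1 i, Finset.sum_comm, Finset.mul_sum]
    refine Finset.sum_congr rfl fun a _ => ?_
    rw [ContinuousLinearMap.sum_apply, Finset.mul_sum]
    refine Finset.sum_congr rfl fun i _ => ?_
    rw [ContinuousLinearMap.smul_apply]
    simp [smul_eq_mul]
    ring
  rw [hfinal]
  have hbound : ∑ a : ↥A, (∑ i, a.1 i • zs i) (ofW (g a)) ≤ 1 := by
    refine le_trans (Finset.sum_le_sum fun a _ => ?_) hgDD
    calc (∑ i, a.1 i • zs i) (ofW (g a))
        ≤ ‖(∑ i, a.1 i • zs i) (ofW (g a))‖ := le_abs_self _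
      _ ≤ ‖∑ i, a.1 i • zs i‖ * ‖ofW (g a)‖ := ContinuousLinearMap.le_opNorm _ _
      _ ≤ r a.1 * ‖ofW (g a)‖ :=
          mul_le_mul_of_nonneg_right (hrz a.1 a.2) (norm_nonneg _)
  calc σ' * ∑ a : ↥A, (∑ i, a.1 i • zs i) (ofW (g a)) ≤ σ' * 1 :=
        mul_le_mul_of_nonneg_left hbound hσ'pos.le
    _ = σ + δ := by rw [mul_one]




/-! ### the sup over the predual ball -/

def preV (q : ℝ) {n : ℕ} (zs : Fin n → ((Y →L[ℝ] ℝ) →L[ℝ] ℝ)) : ℝ :=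
  ⨆ h : {h : Y →L[ℝ] ℝ // ‖h‖ ≤ 1}, (∑ i, |zs i h.1| ^ q) ^ (1 / q)

section PreV

variable (hq : 0 < q) {n : ℕ} (zs : Fin n → ((Y →L[ℝ] ℝ) →L[ℝ] ℝ))
include hq

lemma preV_nonneg : 0 ≤ preV q zs :=
  Real.iSup_nonneg fun h => Real.rpow_nonneg
    (Finset.sum_nonneg fun i _ => Real.rpow_nonneg (abs_nonneg _) _) _

lemma preV_bddAbove : BddAbove (Set.range fun h : {h : Y →L[ℝ] ℝ // ‖h‖ ≤ 1} =>
    (∑ i, |zs i h.1| ^ q) ^ (1 / q)) := by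
  refine ⟨(∑ i, ‖zs i‖ ^ q) ^ (1 / q), ?_⟩
  rintro _ ⟨h, rfl⟩
  apply Real.rpow_le_rpow (Finset.sum_nonneg fun i _ => Real.rpow_nonneg (abs_nonneg _) _)
    (Finset.sum_le_sum fun i _ => ?_) (by positivity)
  apply Real.rpow_le_rpow (abs_nonneg _) ?_ hq.le
  calc |zs i h.1| = ‖zs i h.1‖ := (Real.norm_eq_abs _).symm
    _ ≤ ‖zs i‖ * ‖h.1‖ := (zs i).le_opNorm _
    _ ≤ ‖zs i‖ * 1 := mul_le_mul_of_nonneg_left h.2 (norm_nonneg (zs i))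
    _ = ‖zs i‖ := mul_one _

lemma le_preV (h : Y →L[ℝ] ℝ) (hh : ‖h‖ ≤ 1) :
    (∑ i, |zs i h| ^ q) ^ (1 / q) ≤ preV q zs :=
  le_ciSup (preV_bddAbove hq zs) (⟨h, hh⟩ : {h : Y →L[ℝ] ℝ // ‖h‖ ≤ 1})

lemma preV_hom (h : Y →L[ℝ] ℝ) :
    (∑ i, |zs i h| ^ q) ^ (1 / q) ≤ preV q zs * ‖h‖ := by
  rcases eq_or_ne h 0 with rfl | hne
  · simp only [map_zero, abs_zero, Real.zero_rpow hq.ne', Finset.sum_const_zero, norm_zero,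
      mul_zero]
    rw [Real.zero_rpow (by positivity)]
  · have hn : 0 < ‖h‖ := norm_pos_iff.2 hne
    have h1 : ‖(‖h‖⁻¹ • h)‖ ≤ 1 := by
      rw [show ‖(‖h‖⁻¹ • h)‖ = ‖(‖h‖⁻¹)‖ * ‖h‖ from norm_smul _ h, Real.norm_eq_abs,
        abs_of_pos (inv_pos.2 hn), inv_mul_cancel₀ hn.ne']
    have h2 := le_preV hq zs _ h1
    have h3 : ∀ i, |zs i (‖h‖⁻¹ • h)| ^ q = (‖h‖⁻¹) ^ q * |zs i h| ^ q := by
      intro i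
      rw [map_smul, smul_eq_mul, abs_mul, abs_of_pos (inv_pos.2 hn),
        Real.mul_rpow (inv_pos.2 hn).le (abs_nonneg _)]
    rw [Finset.sum_congr rfl fun i _ => h3 i, ← Finset.mul_sum,
      Real.mul_rpow (by positivity) (Finset.sum_nonneg fun i _ => by positivity),
      ← Real.rpow_mul (inv_pos.2 hn).le] at h2
    have h4 : (‖h‖⁻¹) ^ (q * (1 / q)) = ‖h‖⁻¹ := by
      rw [mul_one_div_cancel hq.ne', Real.rpow_one]
    rw [h4] at h2
    calc (∑ i, |zs i h| ^ q) ^ (1 / q)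
        = ‖h‖ * (‖h‖⁻¹ * (∑ i, |zs i h| ^ q) ^ (1 / q)) := by
          rw [← mul_assoc, mul_inv_cancel₀ hn.ne', one_mul]
      _ ≤ ‖h‖ * preV q zs := mul_le_mul_of_nonneg_left h2 hn.le
      _ = preV q zs * ‖h‖ := mul_comm _ _

/-- `V ≤ W` : the predual-ball sup is dominated by the full dual-ball sup. -/
lemma preV_le_dualBallSup : preV q zs ≤ dualBallSup q zs := by
  apply ciSup_le
  rintro ⟨h, hh⟩
  have hg : ‖NormedSpace.inclusionInDoubleDual ℝ (Y →L[ℝ] ℝ) h‖ ≤ 1 :=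
    le_trans (NormedSpace.double_dual_bound ℝ (Y →L[ℝ] ℝ) h) hh
  have hval : ∀ i, |zs i h| = |(NormedSpace.inclusionInDoubleDual ℝ (Y →L[ℝ] ℝ) h) (zs i)| := by
    intro i
    rw [NormedSpace.dual_def]
  calc (∑ i, |zs i h| ^ q) ^ (1 / q)
      = (∑ i, |(NormedSpace.inclusionInDoubleDual ℝ (Y →L[ℝ] ℝ) h) (zs i)| ^ q) ^ (1 / q) := by
        rw [Finset.sum_congr rfl fun i _ => by rw [hval i]]
    _ ≤ dualBallSup q zs :=
        le_dualBallSup hq zs _ hg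

end PreV


lemma sign_mul_self_eq_abs (c : ℝ) : Real.sign c * c = |c| := by
  rcases lt_trichotomy c 0 with h | h | h
  · rw [Real.sign_of_neg h, abs_of_neg h]; ring
  · simp [h]
  · rw [Real.sign_of_pos h, abs_of_pos h]; ring

lemma abs_sign_le_one (c : ℝ) : |Real.sign c| ≤ 1 := by
  rcases lt_trichotomy c 0 with h | h | h
  · rw [Real.sign_of_neg h]; norm_num
  · simp [h, Real.sign_zero]
  · rw [Real.sign_of_pos h]; norm_num

lemma hoelder_abs (hp : 1 < p) (hpq : 1 / p + 1 / q = 1) {n : ℕ} (a c : Fin n → ℝ) :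
    ∑ i, |a i| * |c i| ≤ (∑ i, |a i| ^ p) ^ (1 / p) * (∑ i, |c i| ^ q) ^ (1 / q) := by
  have h := Real.inner_le_Lp_mul_Lq (Finset.univ) (fun i => |a i|) (fun i => |c i|)
    (conj_of hp hpq)
  simpa [abs_abs] using h

lemma single_smul_sum {W : Type*} [AddCommMonoid W] [Module ℝ W] {n : ℕ} (i : Fin n)
    (w : Fin n → W) :
    ∑ j, Pi.single (M := fun _ : Fin n => ℝ) i 1 j • w j = w i := by
  rw [Finset.sum_eq_single_of_mem i (Finset.mem_univ i)]
  · rw [Pi.single_eq_same, one_smul]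
  · intro j _ hj
    rw [Pi.single_eq_of_ne hj, zero_smul]

lemma single_pnorm_le (hp : 1 < p) {n : ℕ} (i : Fin n) :
    (∑ j, |Pi.single (M := fun _ : Fin n => ℝ) i 1 j| ^ p) ^ (1 / p) ≤ 1 := by
  have hp0 : (0:ℝ) < p := lt_trans one_pos hp
  have h1 : ∑ j, |Pi.single (M := fun _ : Fin n => ℝ) i 1 j| ^ p = 1 := by
    rw [Finset.sum_eq_single_of_mem i (Finset.mem_univ i)]
    · rw [Pi.single_eq_same, abs_one, Real.one_rpow]
    · intro j _ hj
      rw [Pi.single_eq_of_ne hj, abs_zero, Real.zero_rpow hp0.ne']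
  rw [h1, Real.one_rpow]

/-- The core approximation lemma: elements of the bidual acting on finitely many
functionals can be replaced by elements of `Y`, at the price of `ε`, without increasing
the weak `ℓ_q` norm. -/
lemma core (hp : 1 < p) (hpq : 1 / p + 1 / q = 1) {n : ℕ}
    (zs : Fin n → ((Y →L[ℝ] ℝ) →L[ℝ] ℝ)) (v : Fin n → (Y →L[ℝ] ℝ))
    {ε : ℝ} (hε : 0 < ε) :
    ∃ y : Fin n → Y, dualBallSup q y ≤ preV q zs + ε ∧
      ∑ i, zs i (v i) ≤ (∑ i, (v i) (y i)) + ε := by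
  classical
  have hq1 : 1 < q := (Real.HolderTriple.lt (conj_of hp hpq).symm)
  have hq0 : 0 < q := lt_trans one_pos hq1
  have hp0 : (0:ℝ) < p := lt_trans one_pos hp
  set V := preV q zs with hVdef
  have hV0 : 0 ≤ V := preV_nonneg hq0 zs
  set s := ∑ i, zs i (v i) with hsdef
  rcases le_or_gt s ε with hse | hse
  · refine ⟨fun _ => 0, ?_, ?_⟩
    · have h0 : dualBallSup q (fun _ : Fin n => (0:Y)) ≤ 0 := by
        apply ciSup_le
        rintro ⟨g, hg⟩
        simp only [map_zero, abs_zero, Real.zero_rpow hq0.ne', Finset.sum_const_zero]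
        rw [Real.zero_rpow (by positivity)]
      linarith
    · simpa using hse
  rcases Nat.eq_zero_or_pos n with hn0 | hn0
  · exfalso
    have hs0 : s = 0 := by
      rw [hsdef]
      subst hn0
      simp
    linarith
  -- constants
  set δ' : ℝ := ε / 2 with hδ'def
  have hδ'pos : 0 < δ' := by positivity
  set K : ℝ := (n : ℝ) * (V + ε / 2) with hKdef
  have hK0 : 0 ≤ K := by positivity
  set δ : ℝ := ε / (2 * (K + 1)) with hδdef
  have hδpos : 0 < δ := by positivity
  -- the compact p-ball
  set Bq : Set (Fin n → ℝ) := {a | (∑ i, |a i| ^ p) ^ (1 / p) ≤ 1} with hBqdef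
  have hnorm_cont : Continuous fun a : Fin n → ℝ => (∑ i, |a i| ^ p) ^ (1 / p) := by
    have h1 : Continuous fun a : Fin n → ℝ => ∑ i, |a i| ^ p :=
      continuous_finset_sum _ fun i _ =>
        ((continuous_abs.comp (continuous_apply i)).rpow_const fun a => Or.inr hp0.le)
    exact h1.rpow_const fun a => Or.inr (by positivity)
  have hBqclosed : IsClosed Bq := isClosed_le hnorm_cont continuous_const
  have habs_le : ∀ a ∈ Bq, ∀ i, |a i| ≤ 1 := by
    intro a ha i
    have h1 : |a i| ^ p ≤ ∑ j, |a j| ^ p :=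
      Finset.single_le_sum (f := fun j => |a j| ^ p)
        (fun j _ => Real.rpow_nonneg (abs_nonneg _) _) (Finset.mem_univ i)
    have h2 : (|a i| ^ p) ^ (1 / p) ≤ (∑ j, |a j| ^ p) ^ (1 / p) :=
      Real.rpow_le_rpow (Real.rpow_nonneg (abs_nonneg _) _) h1 (by positivity)
    rw [← Real.rpow_mul (abs_nonneg _), mul_one_div_cancel hp0.ne', Real.rpow_one] at h2
    exact h2.trans ha
  have hBqcompact : IsCompact Bq := by
    have hsub : Bq ⊆ Metric.closedBall 0 1 := by
      intro a ha
      rw [Metric.mem_closedBall, dist_pi_le_iff zero_le_one]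
      intro i
      rw [Real.dist_eq, Pi.zero_apply, sub_zero]
      exact habs_le a ha i
    exact IsCompact.of_isClosed_subset (isCompact_closedBall 0 1) hBqclosed hsub
  -- a finite δ-net of Bq inside Bq
  obtain ⟨tset, htsub, htfin, htcover⟩ :=
    totallyBounded_iff_subset.1 hBqcompact.totallyBounded
      {x : (Fin n → ℝ) × (Fin n → ℝ) | dist x.1 x.2 < δ} (Metric.dist_mem_uniformity hδpos)
  set A : Finset (Fin n → ℝ) :=
    htfin.toFinset ∪ Finset.image (fun i => Pi.single (M := fun _ : Fin n => ℝ) i 1)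
      Finset.univ with hAdef
  have hones : ∀ i : Fin n, Pi.single (M := fun _ : Fin n => ℝ) i 1 ∈ A := by
    intro i
    exact Finset.mem_union_right _ (Finset.mem_image_of_mem _ (Finset.mem_univ i))
  have hAne : A.Nonempty := ⟨_, hones ⟨0, hn0⟩⟩
  have hA1 : ∀ a ∈ A, (∑ i, |a i| ^ p) ^ (1 / p) ≤ 1 := by
    intro a ha
    rcases Finset.mem_union.1 ha with h | h
    · exact htsub (htfin.mem_toFinset.1 h)
    · obtain ⟨i, -, rfl⟩ := Finset.mem_image.1 h
      exact single_pnorm_le hp i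
  -- bound on ‖∑ aᵢ • zsᵢ‖ for a in the p-ball
  have hRle : ∀ a : Fin n → ℝ, (∑ i, |a i| ^ p) ^ (1 / p) ≤ 1 → ‖∑ i, a i • zs i‖ ≤ V := by
    intro a ha
    apply ContinuousLinearMap.opNorm_le_bound _ hV0
    intro h
    have h1 : (∑ i, a i • zs i) h = ∑ i, a i * zs i h := by
      rw [ContinuousLinearMap.sum_apply]
      exact Finset.sum_congr rfl fun i _ => rfl
    rw [Real.norm_eq_abs, h1]
    calc |∑ i, a i * zs i h| ≤ ∑ i, |a i * zs i h| := Finset.abs_sum_le_sum_abs _ _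
      _ = ∑ i, |a i| * |zs i h| := by
          exact Finset.sum_congr rfl fun i _ => abs_mul _ _
      _ ≤ (∑ i, |a i| ^ p) ^ (1 / p) * (∑ i, |zs i h| ^ q) ^ (1 / q) :=
          hoelder_abs hp hpq a _
      _ ≤ 1 * (V * ‖h‖) := by
          refine mul_le_mul ha (preV_hom hq0 zs h) (by positivity) zero_le_one
      _ = V * ‖h‖ := one_mul _
  set r : (Fin n → ℝ) → ℝ := fun a => ‖∑ i, a i • zs i‖ + δ' with hrdef
  have hr0 : ∀ a ∈ A, 0 < r a := fun a _ => by positivity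
  have hrz : ∀ a ∈ A, ‖∑ i, a i • zs i‖ ≤ r a := fun a _ => by
    show ‖∑ i, a i • zs i‖ ≤ ‖∑ i, a i • zs i‖ + δ'
    linarith [hδ'pos]
  have hsep : ∀ y : Fin n → Y, (∀ a ∈ A, ∑ i, a i • y i = 0) → ∀ i, y i = 0 := by
    intro y hy i
    have := hy _ (hones i)
    rwa [single_smul_sum] at this
  -- the key net estimate
  have hKey : ∀ y : Fin n → Y, (∀ a ∈ A, ‖∑ i, a i • y i‖ ≤ r a) →
      dualBallSup q y ≤ V + ε := by
    intro y hy
    have hyn : ∀ i, ‖y i‖ ≤ V + δ' := by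
      intro i
      have h1 := hy _ (hones i)
      rw [single_smul_sum] at h1
      refine h1.trans ?_
      rw [hrdef]
      have h2 : ‖∑ j, Pi.single (M := fun _ : Fin n => ℝ) i 1 j • zs j‖ ≤ V := by
        refine le_trans (le_of_eq ?_) (hRle _ (single_pnorm_le hp i))
        rw [single_smul_sum]
      have h3 := hRle _ (single_pnorm_le hp i)
      rw [single_smul_sum] at h3
      simp only []
      linarith
    apply ciSup_le
    rintro ⟨g, hg⟩
    set c : Fin n → ℝ := fun i => g (y i) with hcdef
    show (∑ i, |c i| ^ q) ^ (1 / q) ≤ V + ε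
    rcases eq_or_ne (∑ i, |c i| ^ q) 0 with ht0 | ht0
    · rw [ht0, Real.zero_rpow (by positivity)]
      positivity
    · set t := ∑ i, |c i| ^ q with htdef
      have htnn : 0 ≤ t := Finset.sum_nonneg fun i _ => Real.rpow_nonneg (abs_nonneg _) _
      have htpos : 0 < t := lt_of_le_of_ne htnn (Ne.symm ht0)
      set b : Fin n → ℝ := fun i => (Real.sign (c i) * |c i| ^ (q - 1)) / t ^ (1 / p)
        with hbdef
      have hqp : (q - 1) * p = q := (conj_of hp hpq).symm.sub_one_mul_conj
      -- b lies in the p-ball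
      have hbBq : (∑ i, |b i| ^ p) ^ (1 / p) ≤ 1 := by
        have hb1 : ∀ i, |b i| ^ p ≤ |c i| ^ q / t := by
          intro i
          have h4 : |b i| ≤ |c i| ^ (q - 1) / t ^ (1 / p) := by
            rw [hbdef]
            simp only []
            rw [abs_div, abs_mul, abs_of_nonneg (Real.rpow_nonneg (abs_nonneg _) _),
              abs_of_nonneg (Real.rpow_nonneg htnn _)]
            apply div_le_div_of_nonneg_right ?_ (Real.rpow_pos_of_pos htpos _).le
            calc |Real.sign (c i)| * |c i| ^ (q - 1)
                ≤ 1 * |c i| ^ (q - 1) :=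
                  mul_le_mul_of_nonneg_right (abs_sign_le_one _)
                    (Real.rpow_nonneg (abs_nonneg _) _)
              _ = |c i| ^ (q - 1) := one_mul _
          calc |b i| ^ p ≤ (|c i| ^ (q - 1) / t ^ (1 / p)) ^ p :=
                Real.rpow_le_rpow (abs_nonneg _) h4 hp0.le
            _ = |c i| ^ q / t := by
                rw [Real.div_rpow (Real.rpow_nonneg (abs_nonneg _) _)
                    (Real.rpow_nonneg htnn _),
                  ← Real.rpow_mul (abs_nonneg _), hqp,
                  ← Real.rpow_mul htnn, one_div_mul_cancel hp0.ne', Real.rpow_one]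
        have hb2 : ∑ i, |b i| ^ p ≤ 1 := by
          calc ∑ i, |b i| ^ p ≤ ∑ i, |c i| ^ q / t := Finset.sum_le_sum fun i _ => hb1 i
            _ = (∑ i, |c i| ^ q) / t := by rw [Finset.sum_div]
            _ = 1 := by rw [← htdef, div_self htpos.ne']
        calc (∑ i, |b i| ^ p) ^ (1 / p)
            ≤ (1 : ℝ) ^ (1 / p) := Real.rpow_le_rpow
              (Finset.sum_nonneg fun i _ => Real.rpow_nonneg (abs_nonneg _) _) hb2
              (by positivity)
          _ = 1 := Real.one_rpow _
      -- the duality identity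
      have hdual : t ^ (1 / q) = ∑ i, b i * c i := by
        have h5 : ∀ i, b i * c i = |c i| ^ q / t ^ (1 / p) := by
          intro i
          rw [hbdef]
          simp only []
          rw [div_mul_eq_mul_div, mul_assoc, mul_comm (|c i| ^ (q - 1)) (c i),
            ← mul_assoc, sign_mul_self_eq_abs]
          congr 1
          rcases eq_or_ne (c i) 0 with hc0 | hc0
          · rw [hc0, abs_zero, Real.zero_rpow hq0.ne',
              Real.zero_rpow (by linarith : q - 1 ≠ 0), mul_zero]
          · rw [mul_comm, ← Real.rpow_add_one (abs_ne_zero.2 hc0), sub_add_cancel]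
        rw [Finset.sum_congr rfl fun i _ => h5 i, ← Finset.sum_div, ← htdef]
        rw [show t / t ^ (1 / p) = t ^ ((1:ℝ) - 1 / p) from by
          rw [Real.rpow_sub htpos, Real.rpow_one]]
        congr 1
        linarith [hpq]
      -- t^{1/q} ≤ ‖∑ bᵢ • yᵢ‖
      have hval : t ^ (1 / q) ≤ ‖∑ i, b i • y i‖ := by
        rw [hdual]
        have h6 : ∑ i, b i * c i = g (∑ i, b i • y i) := by
          rw [map_sum]
          exact Finset.sum_congr rfl fun i _ => by rw [map_smul]; rfl
        rw [h6]
        calc g (∑ i, b i • y i) ≤ |g (∑ i, b i • y i)| := le_abs_self _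
          _ = ‖g (∑ i, b i • y i)‖ := (Real.norm_eq_abs _).symm
          _ ≤ ‖g‖ * ‖∑ i, b i • y i‖ := g.le_opNorm _
          _ ≤ 1 * ‖∑ i, b i • y i‖ := mul_le_mul_of_nonneg_right hg (norm_nonneg _)
          _ = ‖∑ i, b i • y i‖ := one_mul _
      -- net approximation
      have hbmem : b ∈ Bq := hbBq
      have hcov := htcover hbmem
      rw [Set.mem_iUnion₂] at hcov
      obtain ⟨a, haT, hab⟩ := hcov
      have haA : a ∈ A := Finset.mem_union_left _ (htfin.mem_toFinset.2 haT)
      have habd : dist b a < δ := hab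
      have hsplit : ‖∑ i, b i • y i‖ ≤ ‖∑ i, a i • y i‖ + ∑ i, |b i - a i| * ‖y i‖ := by
        have h7 : ∑ i, b i • y i = (∑ i, a i • y i) + ∑ i, (b i - a i) • y i := by
          rw [← Finset.sum_add_distrib]
          refine Finset.sum_congr rfl fun i _ => ?_
          rw [← add_smul]
          congr 1
          ring
        rw [h7]
        refine le_trans (norm_add_le _ _) ?_
        gcongr
        refine le_trans (norm_sum_le _ _) ?_
        refine Finset.sum_le_sum fun i _ => ?_
        rw [show ‖(b i - a i) • y i‖ = ‖b i - a i‖ * ‖y i‖ from norm_smul _ _,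
          Real.norm_eq_abs]
      have hterm : ∑ i, |b i - a i| * ‖y i‖ ≤ (n : ℝ) * (δ * (V + δ')) := by
        calc ∑ i, |b i - a i| * ‖y i‖ ≤ ∑ _i : Fin n, δ * (V + δ') := by
              refine Finset.sum_le_sum fun i _ => ?_
              refine mul_le_mul ?_ (hyn i) (norm_nonneg _) hδpos.le
              calc |b i - a i| = dist (b i) (a i) := (Real.dist_eq _ _).symm
                _ ≤ dist b a := dist_le_pi_dist b a i
                _ ≤ δ := habd.le
          _ = (n : ℝ) * (δ * (V + δ')) := by
              rw [Finset.sum_const, Finset.card_univ, Fintype.card_fin, nsmul_eq_mul]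
      have hnd : (n : ℝ) * (δ * (V + δ')) ≤ ε / 2 := by
        have h8 : (n : ℝ) * (δ * (V + δ')) = δ * K := by
          rw [hKdef, hδ'def]
          ring
        rw [h8, hδdef]
        rw [div_mul_eq_mul_div, div_le_iff₀ (by positivity : (0:ℝ) < 2 * (K + 1))]
        nlinarith [hε.le, hK0]
      have hra : r a ≤ V + δ' := by
        rw [hrdef]
        simp only []
        have := hRle a (hA1 a haA)
        linarith
      calc (∑ i, |c i| ^ q) ^ (1 / q) = t ^ (1 / q) := by rw [htdef]
        _ ≤ ‖∑ i, b i • y i‖ := hval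
        _ ≤ ‖∑ i, a i • y i‖ + ∑ i, |b i - a i| * ‖y i‖ := hsplit
        _ ≤ r a + (n : ℝ) * (δ * (V + δ')) := add_le_add (hy a haA) hterm
        _ ≤ (V + δ') + ε / 2 := add_le_add hra hnd
        _ = V + ε := by rw [hδ'def]; ring
  -- conclude by contradiction using F4
  by_contra hcon
  push_neg at hcon
  have hσ : ∀ y : Fin n → Y, (∀ a ∈ A, ‖∑ i, a i • y i‖ ≤ r a) →
      ∑ i, (v i) (y i) ≤ s - ε := by
    intro y hy
    have h1 := hKey y hy
    have h2 := hcon y h1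
    linarith
  have := F4 zs v A hAne r hr0 hrz hsep (s - ε) (by linarith) hσ
  rw [← hsdef] at this
  linarith


/-! ### P2 : the bound on `φ_T` implies the summing inequality -/

lemma P2 (hp : 1 < p) (hpq : 1 / p + 1 / q = 1) (T : X → Y →L[ℝ] ℝ)
    {S : ℝ} (hS : 0 ≤ S)
    (hbound : ∀ m : MolSpace X Y, |phiT T m| ≤ S * muNorm p q (m : X →₀ Y)) :
    LipCohenCond p q T S := by
  classical
  have hq1 : 1 < q := (Real.HolderTriple.lt (conj_of hp hpq).symm)
  have hq0 : 0 < q := lt_trans one_pos hq1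
  intro n x x' zs lam hlam
  set u : Fin n → (Y →L[ℝ] ℝ) := fun i => T (x i) - T (x' i) with hudef
  set v : Fin n → (Y →L[ℝ] ℝ) := fun i => (lam i * Real.sign (zs i (u i))) • u i with hvdef
  have hL : ∑ i, lam i * |zs i (T (x i)) - zs i (T (x' i))| = ∑ i, zs i (v i) := by
    refine Finset.sum_congr rfl fun i _ => ?_
    have h1 : zs i (T (x i)) - zs i (T (x' i)) = zs i (u i) := by
      rw [hudef]
      simp only [map_sub]
    rw [h1, hvdef]
    simp only []
    rw [map_smul, smul_eq_mul, mul_assoc, sign_mul_self_eq_abs]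
  set A := (∑ i, lam i ^ p * dist (x i) (x' i) ^ p) ^ (1 / p) with hAdef
  have hA0 : 0 ≤ A := by
    rw [hAdef]
    exact Real.rpow_nonneg (Finset.sum_nonneg fun i _ =>
      mul_nonneg (Real.rpow_nonneg (hlam i).le _) (Real.rpow_nonneg dist_nonneg _)) _
  have hW0 : 0 ≤ dualBallSup q zs := dualBallSup_nonneg hq0 zs
  rw [hL, show S * (∑ i, lam i ^ p * dist (x i) (x' i) ^ p) ^ (1 / p) * dualBallSup q zs
    = S * A * dualBallSup q zs from rfl]
  refine le_of_forall_pos_le_add fun ε hε => ?_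
  set ε' := ε / (S * A + 1) with hε'def
  have hε'pos : 0 < ε' := by positivity
  obtain ⟨y, hy1, hy2⟩ := core hp hpq zs v hε'pos
  set lam' : Fin n → ℝ := fun i => lam i * Real.sign (zs i (u i)) with hlam'def
  set mm : X →₀ Y := ∑ i, lam' i • molAtom (x i) (x' i) (y i) with hmmdef
  have hmem : mm ∈ MolSpace X Y := by
    rw [hmmdef]
    exact Submodule.sum_mem _ fun i _ => Submodule.smul_mem _ _ (molAtom_mem _ _ _)
  have hphi : phiT T ⟨mm, hmem⟩ = ∑ i, (v i) (y i) := by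
    rw [phiT_eq]
    show (Finsupp.lsum ℝ fun a : X => (T a).toLinearMap) mm = _
    rw [hmmdef, map_sum]
    refine Finset.sum_congr rfl fun i _ => ?_
    rw [map_smul, lsumT_molAtom, smul_eq_mul]
    rfl
  have hmu : muNorm p q mm ≤ A * dualBallSup q y := by
    have hval : ((∑ i, |lam' i| ^ p * dist (x i) (x' i) ^ p) ^ (1 / p) * dualBallSup q y)
        ∈ repSet p q mm := ⟨n, lam', y, x, x', hmmdef, rfl⟩
    refine le_trans (muNorm_le hq0 hval) ?_
    refine mul_le_mul_of_nonneg_right ?_ (dualBallSup_nonneg hq0 y)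
    apply Real.rpow_le_rpow (Finset.sum_nonneg fun i _ => by positivity)
      (Finset.sum_le_sum fun i _ => ?_) (by positivity)
    refine mul_le_mul_of_nonneg_right ?_ (Real.rpow_nonneg dist_nonneg _)
    apply Real.rpow_le_rpow (abs_nonneg _) ?_ (by positivity)
    rw [hlam'def]
    simp only []
    rw [abs_mul]
    calc |lam i| * |Real.sign (zs i (u i))| ≤ |lam i| * 1 :=
        mul_le_mul_of_nonneg_left (abs_sign_le_one _) (abs_nonneg _)
      _ = lam i := by rw [mul_one, abs_of_pos (hlam i)]
  have hfin : S * A * ε' + ε' ≤ ε := by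
    have : S * A * ε' + ε' = (S * A + 1) * ε' := by ring
    rw [this, hε'def, mul_div_cancel₀ _ (by positivity : S * A + 1 ≠ 0)]
  calc ∑ i, zs i (v i) ≤ (∑ i, (v i) (y i)) + ε' := hy2
    _ ≤ |phiT T ⟨mm, hmem⟩| + ε' := by
        rw [hphi]
        exact add_le_add_left (le_abs_self _) _
    _ ≤ S * muNorm p q mm + ε' := add_le_add_left (hbound ⟨mm, hmem⟩) _
    _ ≤ S * (A * (preV q zs + ε')) + ε' := by
        refine add_le_add_left (mul_le_mul_of_nonneg_left ?_ hS) _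
        refine le_trans hmu ?_
        exact mul_le_mul_of_nonneg_left hy1 hA0
    _ ≤ S * (A * (dualBallSup q zs + ε')) + ε' := by
        refine add_le_add_left (mul_le_mul_of_nonneg_left ?_ hS) _
        refine mul_le_mul_of_nonneg_left ?_ hA0
        exact add_le_add_left (preV_le_dualBallSup hq0 zs) _
    _ = S * A * dualBallSup q zs + (S * A * ε' + ε') := by ring
    _ ≤ S * A * dualBallSup q zs + ε := add_le_add_right hfin _

end Aux

/-- `T ↦ φ_T` is an isometric bijection from the Lipschitz-Cohen
strongly `p`-summing maps `T : X → Y*` with `T(0) = 0` onto the `μ_p`-bounded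
linear functionals on `ℱ(X;Y)`:  `𝒟_p^L(X;Y*) = (ℱ(X;Y), μ_p)*`. -/
theorem lipCohen_dual_of_molecules [CompleteSpace Y] (x0 : X) (p q : ℝ)
    (hp : 1 < p) (hpq : 1 / p + 1 / q = 1) :
    -- `φ_T` is `μ_p`-bounded for every Lipschitz-Cohen strongly `p`-summing `T`
    (∀ T : X → (Y →L[ℝ] ℝ), T x0 = 0 → (∃ C > 0, LipCohenCond p q T C) →
      ∃ C ≥ 0, ∀ m : MolSpace X Y, |phiT T m| ≤ C * muNorm p q (m : X →₀ Y)) ∧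
    -- the map `T ↦ φ_T` is injective on this class
    (∀ T₁ T₂ : X → (Y →L[ℝ] ℝ), T₁ x0 = 0 → T₂ x0 = 0 →
      (∃ C > 0, LipCohenCond p q T₁ C) → (∃ C > 0, LipCohenCond p q T₂ C) →
      phiT T₁ = phiT T₂ → T₁ = T₂) ∧
    -- every `μ_p`-bounded linear functional arises as `φ_T` for such a `T`
    (∀ φ : MolSpace X Y →ₗ[ℝ] ℝ,
      (∃ C ≥ 0, ∀ m : MolSpace X Y, |φ m| ≤ C * muNorm p q (m : X →₀ Y)) →
      ∃ T : X → (Y →L[ℝ] ℝ), T x0 = 0 ∧ (∃ C > 0, LipCohenCond p q T C) ∧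
        phiT T = φ) ∧
    -- the bijection is isometric: `‖φ_T‖ = d_p^L(T)`
    (∀ T : X → (Y →L[ℝ] ℝ), T x0 = 0 → (∃ C > 0, LipCohenCond p q T C) →
      sSup {r : ℝ | ∃ m : MolSpace X Y, muNorm p q (m : X →₀ Y) ≤ 1 ∧
          r = |phiT T m|} =
        sInf {C : ℝ | 0 < C ∧ LipCohenCond p q T C}) := by
  classical
  have hq1 : 1 < q := (Real.HolderTriple.lt (conj_of hp hpq).symm)
  have hq0 : 0 < q := lt_trans one_pos hq1
  refine ⟨?_, ?_, ?_, ?_⟩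
  · rintro T hT0 ⟨C, hC, hcond⟩
    exact ⟨C, hC.le, fun m => P1 hp hpq x0 T hC.le hcond m⟩
  · rintro T₁ T₂ h1 h2 - - heq
    exact phiT_injective x0 T₁ T₂ h1 h2 heq
  · rintro φ ⟨C, hC, hφ⟩
    set Tl : X → (Y →ₗ[ℝ] ℝ) := fun x => φ.comp (atomMapL x0 x) with hTldef
    have hb : ∀ x (y : Y), ‖Tl x y‖ ≤ (C * dist x x0) * ‖y‖ := by
      intro x y
      rw [Real.norm_eq_abs]
      have h1 : Tl x y = φ (atomMapL x0 x y) := rfl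
      rw [h1]
      calc |φ (atomMapL x0 x y)| ≤ C * muNorm p q ((atomMapL x0 x y : X →₀ Y)) := hφ _
        _ = C * muNorm p q (molAtom x x0 y) := by rw [atomMapL_apply]
        _ ≤ C * (dist x x0 * ‖y‖) :=
            mul_le_mul_of_nonneg_left (muNorm_molAtom_le hp hq0 x x0 y) hC
        _ = (C * dist x x0) * ‖y‖ := by ring
    set T : X → (Y →L[ℝ] ℝ) := fun x => LinearMap.mkContinuous (Tl x) (C * dist x x0) (hb x)
      with hTdef
    have hTapp : ∀ x (y : Y), T x y = φ (atomMapL x0 x y) := fun x y => rfl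
    have hT0 : T x0 = 0 := by
      ext y
      rw [hTapp]
      have h2 : atomMapL x0 x0 y = 0 := by
        apply Subtype.ext
        rw [atomMapL_apply]
        simp [molAtom]
      rw [h2, map_zero]
      rfl
    have hTφ : phiT T = φ := by
      apply LinearMap.ext
      intro m
      have hm := molecule_eq_sum_atomMapL x0 m
      conv_rhs => rw [hm, map_sum]
      have h2 : phiT T m = ∑ a ∈ (m : X →₀ Y).support, T a ((m : X →₀ Y) a) := by
        rw [phiT_eq, Finsupp.lsum_apply]
        rfl
      rw [h2]
      exact Finset.sum_congr rfl fun a _ => hTapp a _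
    refine ⟨T, hT0, ⟨C + 1, by positivity, ?_⟩, hTφ⟩
    apply P2 hp hpq T (by positivity)
    intro m
    have h3 : phiT T m = φ m := by rw [hTφ]
    rw [h3]
    calc |φ m| ≤ C * muNorm p q (m : X →₀ Y) := hφ m
      _ ≤ (C + 1) * muNorm p q (m : X →₀ Y) :=
          mul_le_mul_of_nonneg_right (by linarith) (muNorm_nonneg hq0 _)
  · rintro T hT0 ⟨C₀, hC₀, hcond₀⟩
    set SSet := {r : ℝ | ∃ m : MolSpace X Y, muNorm p q (m : X →₀ Y) ≤ 1 ∧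
      r = |phiT T m|} with hSSetdef
    have hmu0 : muNorm p q (((0 : MolSpace X Y) : X →₀ Y)) ≤ 1 := by
      have h1 : ((0 : MolSpace X Y) : X →₀ Y) = (0 : X →₀ Y) := rfl
      rw [h1]
      exact le_trans (muNorm_zero_le' hp hq0) zero_le_one
    have h0mem : (0:ℝ) ∈ SSet := ⟨0, hmu0, by simp⟩
    have hSne : SSet.Nonempty := ⟨0, h0mem⟩
    have hbdd : BddAbove SSet := by
      refine ⟨C₀, ?_⟩
      rintro r ⟨m, hm, rfl⟩
      calc |phiT T m| ≤ C₀ * muNorm p q (m : X →₀ Y) := P1 hp hpq x0 T hC₀.le hcond₀ m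
        _ ≤ C₀ * 1 := mul_le_mul_of_nonneg_left hm hC₀.le
        _ = C₀ := mul_one _
    set S := sSup SSet with hSdef
    have hS0 : 0 ≤ S := le_csSup hbdd h0mem
    have hSb : ∀ m : MolSpace X Y, |phiT T m| ≤ S * muNorm p q (m : X →₀ Y) := by
      intro m
      rcases eq_or_lt_of_le (muNorm_nonneg hq0 ((m : X →₀ Y))) with hmu | hmu
      · have h1 : |phiT T m| ≤ C₀ * muNorm p q (m : X →₀ Y) :=
          P1 hp hpq x0 T hC₀.le hcond₀ m
        rw [← hmu, mul_zero] at h1 ⊢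
        exact h1
      · set c := muNorm p q (m : X →₀ Y) with hcdef
        set m' : MolSpace X Y := c⁻¹ • m with hm'def
        have hsm : ((m' : X →₀ Y)) = c⁻¹ • (m : X →₀ Y) := rfl
        have hmu' : muNorm p q (m' : X →₀ Y) ≤ 1 := by
          rw [hsm]
          refine le_trans (muNorm_smul_le hp hq0 x0 m.2 c⁻¹) ?_
          rw [abs_of_pos (inv_pos.2 hmu), ← hcdef, inv_mul_cancel₀ hmu.ne']
        have h2 : |phiT T m'| ≤ S := le_csSup hbdd ⟨m', hmu', rfl⟩
        have h3 : phiT T m = c * phiT T m' := by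
          rw [hm'def, map_smul, smul_eq_mul, ← mul_assoc, mul_inv_cancel₀ hmu.ne', one_mul]
        rw [h3, abs_mul, abs_of_pos hmu]
        calc c * |phiT T m'| ≤ c * S := mul_le_mul_of_nonneg_left h2 hmu.le
          _ = S * c := mul_comm _ _
    have hcondS : LipCohenCond p q T S := P2 hp hpq T hS0 hSb
    set ISet := {C : ℝ | 0 < C ∧ LipCohenCond p q T C} with hISetdef
    have hIne : ISet.Nonempty := ⟨C₀, hC₀, hcond₀⟩
    have hIbdd : BddBelow ISet := ⟨0, fun C hC => hC.1.le⟩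
    have hSle : S ≤ sInf ISet := by
      apply le_csInf hIne
      rintro C ⟨hCpos, hCcond⟩
      apply csSup_le hSne
      rintro r ⟨m, hm, rfl⟩
      calc |phiT T m| ≤ C * muNorm p q (m : X →₀ Y) := P1 hp hpq x0 T hCpos.le hCcond m
        _ ≤ C * 1 := mul_le_mul_of_nonneg_left hm hCpos.le
        _ = C := mul_one _
    have hcond_mono : ∀ C C' : ℝ, C ≤ C' → LipCohenCond p q T C → LipCohenCond p q T C' := by
      intro C C' hle hC n x x' zs lam hlam
      refine le_trans (hC n x x' zs lam hlam) ?_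
      rw [mul_assoc, mul_assoc]
      refine mul_le_mul_of_nonneg_right hle ?_
      refine mul_nonneg (Real.rpow_nonneg (Finset.sum_nonneg fun i _ =>
        mul_nonneg (Real.rpow_nonneg (hlam i).le _) (Real.rpow_nonneg dist_nonneg _)) _)
        (dualBallSup_nonneg hq0 zs)
    have hInfle : sInf ISet ≤ S := by
      rcases eq_or_lt_of_le hS0 with hS0' | hSpos
      · have h4 : ∀ ε > (0:ℝ), sInf ISet ≤ 0 + ε := by
          intro ε hε
          rw [zero_add]
          apply csInf_le hIbdd
          exact ⟨hε, hcond_mono S ε (by rw [← hS0']; exact hε.le) hcondS⟩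
        have h5 : sInf ISet ≤ 0 := le_of_forall_pos_le_add h4
        rw [← hS0']
        exact h5
      · exact csInf_le hIbdd ⟨hSpos, hcondS⟩
    exact le_antisymm hSle hInfle

end
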